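/- arXiv:2108.09116 — 7 statements merged into one kernel-verified Lean document; each statement's English description precedes it below -/
import Mathlib

section
/- Let N, M be natural numbers, let β > 0, and let F be a nonempty set of matrices in ℝ^{N×M} all of whose entries are bounded in absolute value by β. A matrix X̂ ∈ F minimizes the number of nonzero rows over F if and only if there exists b̂ ∈ {0,1}^N with −β b̂_i ≤ X̂_{ij} ≤ β b̂_i for all i, j such that the pair (X̂, b̂) minimizes ∑_{i=1}^N b_i over all pairs (X, b) with X ∈ F, b ∈ {0,1}^N, and −β b_i ≤ X_{ij} ≤ β b_i for all i, j. -/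
open scoped Classical

lemma gs_card_le_sum {N M : ℕ} {β : ℝ} (hβ : 0 < β)
    (X : Matrix (Fin N) (Fin M) ℝ) (b : Fin N → ℝ)
    (hb01 : ∀ i, b i = 0 ∨ b i = 1)
    (hc : ∀ i j, -(β * b i) ≤ X i j ∧ X i j ≤ β * b i) :
    ((Finset.univ.filter (fun i => X i ≠ 0)).card : ℝ) ≤ ∑ i, b i := by
  have h : ((Finset.univ.filter (fun i => X i ≠ 0)).card : ℝ)
      = ∑ i, (if X i ≠ 0 then (1:ℝ) else 0) := by
    convert (Finset.sum_boole (R := ℝ) (fun i => X i ≠ 0) Finset.univ).symm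
  rw [h]
  apply Finset.sum_le_sum
  intro i _
  rcases hb01 i with h0 | h1
  · have hz : X i = 0 := by
      funext j
      have := hc i j
      rw [h0, mul_zero] at this
      have h2 : X i j ≤ 0 := this.2
      have h1' : -(0:ℝ) ≤ X i j := this.1
      have : (0:ℝ) ≤ X i j := by linarith
      exact le_antisymm h2 this
    simp [hz, h0]
  · rw [h1]
    split <;> norm_num

/-- Minimizer-correspondence part of Lemma 2 of the paper: `X̂ ∈ F` minimizes the number of
nonzero rows over `F` iff there is a binary vector `b̂` satisfying the Big-β constraints for
`X̂` such that the pair `(X̂, b̂)` minimizes `∑ i, b i` over all feasible pairs `(X, b)`. -/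
theorem group_sparsity_minimizer_iff_mip_minimizer (N M : ℕ) (β : ℝ) (hβ : 0 < β)
    (F : Set (Matrix (Fin N) (Fin M) ℝ)) (hF : F.Nonempty)
    (hbound : ∀ X ∈ F, ∀ i j, |X i j| ≤ β)
    (Xhat : Matrix (Fin N) (Fin M) ℝ) (hXhat : Xhat ∈ F) :
    (∀ X ∈ F, (Finset.univ.filter (fun i => Xhat i ≠ 0)).card ≤
        (Finset.univ.filter (fun i => X i ≠ 0)).card) ↔
      ∃ bhat : Fin N → ℝ, (∀ i, bhat i = 0 ∨ bhat i = 1) ∧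
        (∀ i j, -(β * bhat i) ≤ Xhat i j ∧ Xhat i j ≤ β * bhat i) ∧
        (∀ X ∈ F, ∀ b : Fin N → ℝ, (∀ i, b i = 0 ∨ b i = 1) →
          (∀ i j, -(β * b i) ≤ X i j ∧ X i j ≤ β * b i) →
          (∑ i, bhat i) ≤ ∑ i, b i) := by
  -- canonical binary vector for a matrix
  have canon : ∀ X ∈ F, ∃ b : Fin N → ℝ, (∀ i, b i = 0 ∨ b i = 1) ∧
      (∀ i j, -(β * b i) ≤ X i j ∧ X i j ≤ β * b i) ∧
      (∑ i, b i) = ((Finset.univ.filter (fun i => X i ≠ 0)).card : ℝ) := by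
    intro X hX
    refine ⟨fun i => if X i ≠ 0 then 1 else 0, fun i => by by_cases h : X i ≠ 0 <;> simp [h], ?_, ?_⟩
    · intro i j
      by_cases h : X i ≠ 0
      · simp only [if_pos h, mul_one]
        exact abs_le.mp (hbound X hX i j)
      · push_neg at h
        have : X i j = 0 := by rw [h]; rfl
        simp [h, this]
    · convert Finset.sum_boole (R := ℝ) (fun i => X i ≠ 0) Finset.univ
  constructor
  · intro hmin
    obtain ⟨bhat, hb01, hcon, hsum⟩ := canon Xhat hXhat
    refine ⟨bhat, hb01, hcon, ?_⟩
    intro X hX b hb01' hcon'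
    have h1 := gs_card_le_sum hβ X b hb01' hcon'
    have h2 := hmin X hX
    rw [hsum]
    calc ((Finset.univ.filter (fun i => Xhat i ≠ 0)).card : ℝ)
        ≤ ((Finset.univ.filter (fun i => X i ≠ 0)).card : ℝ) := by exact_mod_cast h2
      _ ≤ ∑ i, b i := h1
  · rintro ⟨bhat, hb01, hcon, hopt⟩ X hX
    obtain ⟨b, hb01', hcon', hsum'⟩ := canon X hX
    have h1 := gs_card_le_sum hβ Xhat bhat hb01 hcon
    have h2 := hopt X hX b hb01' hcon'
    have : ((Finset.univ.filter (fun i => Xhat i ≠ 0)).card : ℝ)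
        ≤ ((Finset.univ.filter (fun i => X i ≠ 0)).card : ℝ) := by
      rw [← hsum']; linarith
    exact_mod_cast this
end

section
/- Let L, M, N be natural numbers, let Y ∈ ℝ^{L×M}, S ∈ ℝ^{L×N}, let ε ≥ 0 and β > 0. Then the optimal value of problem P1 — minimize the number of nonzero rows of X over all X ∈ ℝ^{N×M} satisfying ‖Y − S X‖_F ≤ ε and |X_{ij}| ≤ β for all i,j — equals the optimal value of the mixed-integer program P4 — minimize ∑_{i=1}^N b_i over all X ∈ ℝ^{N×M}, b ∈ {0,1}^N, and nonnegative reals ε_1,…,ε_M satisfying (X^i)ᵀ Sᵀ S X^i − 2(Y^i)ᵀ S X^i ≤ ε_i² − ‖Y^i‖_2² for every i ∈ {1,…,M}, ∑_{i=1}^M ε_i² = ε², and −β b_i ≤ X_{ij} ≤ β b_i for all i, j — provided both problems are feasible. -/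
open Matrix
open scoped Classical

lemma expand_sq (L : ℕ) (y v : Fin L → ℝ) :
    ∑ l, (y l - v l) ^ 2 = y ⬝ᵥ y - 2 * (y ⬝ᵥ v) + v ⬝ᵥ v := by
  simp only [dotProduct, Finset.mul_sum, ← Finset.sum_sub_distrib, ← Finset.sum_add_distrib]
  exact Finset.sum_congr rfl fun l _ => by ring

lemma quad_eq (L M N : ℕ) (Y : Matrix (Fin L) (Fin M) ℝ) (S : Matrix (Fin L) (Fin N) ℝ)
    (X : Matrix (Fin N) (Fin M) ℝ) (i : Fin M) :
    (fun k => X k i) ⬝ᵥ ((Sᵀ * S).mulVec fun k => X k i)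
        - 2 * ((fun l => Y l i) ⬝ᵥ (S.mulVec fun k => X k i))
        + (fun l => Y l i) ⬝ᵥ (fun l => Y l i)
      = ∑ l, ((Y - S * X) l i) ^ 2 := by
  have hcol : ∀ l, (Y - S * X) l i = Y l i - S.mulVec (fun k => X k i) l := by
    intro l
    simp [Matrix.sub_apply, Matrix.mul_apply, Matrix.mulVec, dotProduct]
  have h1 : (fun k => X k i) ⬝ᵥ ((Sᵀ * S).mulVec fun k => X k i)
      = (S.mulVec fun k => X k i) ⬝ᵥ (S.mulVec fun k => X k i) := by
    rw [← Matrix.mulVec_mulVec, Matrix.dotProduct_mulVec, Matrix.vecMul_transpose]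
  calc _ = (fun l => Y l i) ⬝ᵥ (fun l => Y l i)
        - 2 * ((fun l => Y l i) ⬝ᵥ (S.mulVec fun k => X k i))
        + (S.mulVec fun k => X k i) ⬝ᵥ (S.mulVec fun k => X k i) := by rw [h1]; ring
    _ = ∑ l, (Y l i - S.mulVec (fun k => X k i) l) ^ 2 := (expand_sq L _ _).symm
    _ = _ := Finset.sum_congr rfl fun l _ => by rw [hcol l]

lemma sum_binary (N : ℕ) (b : Fin N → ℝ) (hb : ∀ i, b i = 0 ∨ b i = 1) :
    ∑ i, b i = ((Finset.univ.filter (fun i => b i ≠ 0)).card : ℝ) := by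
  rw [Finset.card_filter]
  push_cast
  refine Finset.sum_congr rfl fun i _ => ?_
  rcases hb i with h | h <;> simp [h]

/-- Direction P1 → P4: any P1-feasible point maps to a P4-feasible point with the
same objective value (needs ε = 0 when M = 0). -/
lemma P1_to_P4 (L M N : ℕ)
    (Y : Matrix (Fin L) (Fin M) ℝ) (S : Matrix (Fin L) (Fin N) ℝ)
    (ε β : ℝ) (hε : 0 ≤ ε) (hM0 : M = 0 → ε = 0)
    (X : Matrix (Fin N) (Fin M) ℝ)
    (h1 : Real.sqrt (∑ l, ∑ j, ((Y - S * X) l j) ^ 2) ≤ ε)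
    (h2 : ∀ i j, |X i j| ≤ β) :
    ∃ (b : Fin N → ℝ) (εv : Fin M → ℝ),
      (∀ i, b i = 0 ∨ b i = 1) ∧ (∀ i, 0 ≤ εv i) ∧ (∑ i, (εv i) ^ 2) = ε ^ 2 ∧
      (∀ i : Fin M,
        (fun k => X k i) ⬝ᵥ ((Sᵀ * S).mulVec fun k => X k i)
            - 2 * ((fun l => Y l i) ⬝ᵥ (S.mulVec fun k => X k i))
          ≤ (εv i) ^ 2 - (fun l => Y l i) ⬝ᵥ (fun l => Y l i)) ∧
      (∀ i j, -(β * b i) ≤ X i j ∧ X i j ≤ β * b i) ∧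
      (∑ i, b i) = (((Finset.univ.filter (fun i => X i ≠ 0)).card : ℕ) : ℝ) := by
  set b : Fin N → ℝ := fun i => if X i = 0 then 0 else 1 with hbdef
  have hb01 : ∀ i, b i = 0 ∨ b i = 1 := by
    intro i; by_cases h : X i = 0 <;> simp [hbdef, h]
  have hbsum : ∑ i, b i = (((Finset.univ.filter (fun i => X i ≠ 0)).card : ℕ) : ℝ) := by
    rw [sum_binary N b hb01]
    congr 2
    refine Finset.filter_congr fun i _ => ?_
    by_cases h : X i = 0 <;> simp [hbdef, h]
  have hbig : ∀ i j, -(β * b i) ≤ X i j ∧ X i j ≤ β * b i := by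
    intro i j
    by_cases h : X i = 0
    · have : X i j = 0 := by rw [h]; rfl
      simp [hbdef, h, this]
    · have := abs_le.mp (h2 i j)
      simp only [hbdef, h, if_neg, mul_one]
      simpa using this
  -- total residual
  set r2 : Fin M → ℝ := fun i => ∑ l, ((Y - S * X) l i) ^ 2 with hr2def
  have hr2nn : ∀ i, 0 ≤ r2 i := fun i => Finset.sum_nonneg fun l _ => sq_nonneg _
  set T : ℝ := ∑ i, r2 i with hTdef
  have hT : T ≤ ε ^ 2 := by
    have hswap : (∑ l, ∑ j, ((Y - S * X) l j) ^ 2) = T := Finset.sum_comm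
    have hTnn : 0 ≤ T := Finset.sum_nonneg fun i _ => hr2nn i
    calc T = Real.sqrt T ^ 2 := (Real.sq_sqrt hTnn).symm
      _ ≤ ε ^ 2 := by
        apply pow_le_pow_left₀ (Real.sqrt_nonneg _) _ 2
        rw [← hswap]; exact h1
  rcases Nat.eq_zero_or_pos M with hM | hM
  · -- M = 0: no columns
    subst hM
    refine ⟨b, fun i => 0, hb01, fun i => le_refl 0, ?_, fun i => i.elim0, hbig, hbsum⟩
    simp [hM0 rfl]
  · -- M > 0
    have hMpos : (0 : ℝ) < M := by exact_mod_cast hM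
    set c : ℝ := (ε ^ 2 - T) / M with hcdef
    have hcnn : 0 ≤ c := div_nonneg (by linarith) hMpos.le
    refine ⟨b, fun i => Real.sqrt (r2 i + c), hb01, fun i => Real.sqrt_nonneg _, ?_, ?_, hbig,
      hbsum⟩
    · have hsq : ∀ i : Fin M, Real.sqrt (r2 i + c) ^ 2 = r2 i + c := fun i =>
        Real.sq_sqrt (by linarith [hr2nn i])
      calc ∑ i, Real.sqrt (r2 i + c) ^ 2 = ∑ i, (r2 i + c) :=
            Finset.sum_congr rfl fun i _ => hsq i
        _ = T + M * c := by rw [Finset.sum_add_distrib, Finset.sum_const]; simp [hTdef, nsmul_eq_mul]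
        _ = ε ^ 2 := by rw [hcdef]; field_simp; ring
    · intro i
      have hsq : Real.sqrt (r2 i + c) ^ 2 = r2 i + c := Real.sq_sqrt (by linarith [hr2nn i])
      have hq := quad_eq L M N Y S X i
      rw [hsq]
      have : r2 i = ∑ l, ((Y - S * X) l i) ^ 2 := rfl
      linarith [hq, this]

/-- Main reformulation result of Section III of the paper: provided both problems are
feasible, the optimal value of problem P1 (minimize the number of nonzero rows of `X`
subject to `‖Y - S X‖_F ≤ ε` and `|X i j| ≤ β`) equals the optimal value of the MIQCP P4
(minimize `∑ i, b i` over `X`, binary `b`, and nonnegative `ε_1, …, ε_M` subject to the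
column-wise quadratic constraints, `∑ i, ε_i² = ε²`, and the Big-β constraints). -/
theorem P1_optval_eq_P4_optval (L M N : ℕ)
    (Y : Matrix (Fin L) (Fin M) ℝ) (S : Matrix (Fin L) (Fin N) ℝ)
    (ε β : ℝ) (hε : 0 ≤ ε) (hβ : 0 < β)
    (hfeas1 : ∃ X : Matrix (Fin N) (Fin M) ℝ,
      Real.sqrt (∑ l, ∑ j, ((Y - S * X) l j) ^ 2) ≤ ε ∧ ∀ i j, |X i j| ≤ β)
    (hfeas4 : ∃ (X : Matrix (Fin N) (Fin M) ℝ) (b : Fin N → ℝ) (εv : Fin M → ℝ),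
      (∀ i, b i = 0 ∨ b i = 1) ∧ (∀ i, 0 ≤ εv i) ∧ (∑ i, (εv i) ^ 2) = ε ^ 2 ∧
      (∀ i : Fin M,
        (fun k => X k i) ⬝ᵥ ((Sᵀ * S).mulVec fun k => X k i)
            - 2 * ((fun l => Y l i) ⬝ᵥ (S.mulVec fun k => X k i))
          ≤ (εv i) ^ 2 - (fun l => Y l i) ⬝ᵥ (fun l => Y l i)) ∧
      (∀ i j, -(β * b i) ≤ X i j ∧ X i j ≤ β * b i)) :
    sInf {k : ℕ | ∃ X : Matrix (Fin N) (Fin M) ℝ,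
        (Real.sqrt (∑ l, ∑ j, ((Y - S * X) l j) ^ 2) ≤ ε ∧ ∀ i j, |X i j| ≤ β) ∧
        (Finset.univ.filter (fun i => X i ≠ 0)).card = k} =
    sInf {k : ℕ | ∃ (X : Matrix (Fin N) (Fin M) ℝ) (b : Fin N → ℝ) (εv : Fin M → ℝ),
        (∀ i, b i = 0 ∨ b i = 1) ∧ (∀ i, 0 ≤ εv i) ∧ (∑ i, (εv i) ^ 2) = ε ^ 2 ∧
        (∀ i : Fin M,
          (fun k => X k i) ⬝ᵥ ((Sᵀ * S).mulVec fun k => X k i)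
              - 2 * ((fun l => Y l i) ⬝ᵥ (S.mulVec fun k => X k i))
            ≤ (εv i) ^ 2 - (fun l => Y l i) ⬝ᵥ (fun l => Y l i)) ∧
        (∀ i j, -(β * b i) ≤ X i j ∧ X i j ≤ β * b i) ∧
        (∑ i, b i) = (k : ℝ)} := by
  -- ε = 0 when M = 0, extracted from hfeas4
  have hM0 : M = 0 → ε = 0 := by
    intro hM
    obtain ⟨X', b', εv', _, _, hsum', _, _⟩ := hfeas4
    subst hM
    simp only [Finset.univ_eq_empty, Finset.sum_empty] at hsum'
    have := hsum'.symm
    nlinarith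
  set A := {k : ℕ | ∃ X : Matrix (Fin N) (Fin M) ℝ,
      (Real.sqrt (∑ l, ∑ j, ((Y - S * X) l j) ^ 2) ≤ ε ∧ ∀ i j, |X i j| ≤ β) ∧
      (Finset.univ.filter (fun i => X i ≠ 0)).card = k} with hA
  -- P4 → P1 data
  have dir2 : ∀ (X : Matrix (Fin N) (Fin M) ℝ) (b : Fin N → ℝ) (εv : Fin M → ℝ),
      (∀ i, b i = 0 ∨ b i = 1) → (∀ i, 0 ≤ εv i) → (∑ i, (εv i) ^ 2) = ε ^ 2 →
      (∀ i : Fin M,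
        (fun k => X k i) ⬝ᵥ ((Sᵀ * S).mulVec fun k => X k i)
            - 2 * ((fun l => Y l i) ⬝ᵥ (S.mulVec fun k => X k i))
          ≤ (εv i) ^ 2 - (fun l => Y l i) ⬝ᵥ (fun l => Y l i)) →
      (∀ i j, -(β * b i) ≤ X i j ∧ X i j ≤ β * b i) →
      (Real.sqrt (∑ l, ∑ j, ((Y - S * X) l j) ^ 2) ≤ ε ∧ ∀ i j, |X i j| ≤ β) ∧
      ((Finset.univ.filter (fun i => X i ≠ 0)).card : ℝ) ≤ ∑ i, b i := by
    intro X b εv hb01 hεvnn hsum hquad hbig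
    have hcol : ∀ i : Fin M, (∑ l, ((Y - S * X) l i) ^ 2) ≤ (εv i) ^ 2 := by
      intro i
      have hq := quad_eq L M N Y S X i
      linarith [hquad i]
    refine ⟨⟨?_, ?_⟩, ?_⟩
    · have hle : (∑ l, ∑ j, ((Y - S * X) l j) ^ 2) ≤ ε ^ 2 := by
        calc (∑ l, ∑ j, ((Y - S * X) l j) ^ 2)
            = ∑ j, ∑ l, ((Y - S * X) l j) ^ 2 := Finset.sum_comm
          _ ≤ ∑ j, (εv j) ^ 2 := Finset.sum_le_sum fun j _ => hcol j
          _ = ε ^ 2 := hsum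
      calc Real.sqrt (∑ l, ∑ j, ((Y - S * X) l j) ^ 2)
          ≤ Real.sqrt (ε ^ 2) := Real.sqrt_le_sqrt hle
        _ = ε := Real.sqrt_sq hε
    · intro i j
      have hb1 : b i ≤ 1 := by rcases hb01 i with h | h <;> simp [h]
      have := hbig i j
      rw [abs_le]
      constructor
      · nlinarith [this.1]
      · nlinarith [this.2]
    · rw [sum_binary N b hb01]
      have hsub : (Finset.univ.filter (fun i => X i ≠ 0)) ⊆
          (Finset.univ.filter (fun i => b i ≠ 0)) := by
        intro i hi
        simp only [Finset.mem_filter, Finset.mem_univ, true_and] at hi ⊢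
        intro hb0
        apply hi
        funext j
        have := hbig i j
        rw [hb0] at this
        simp only [mul_zero, neg_zero] at this
        exact le_antisymm this.2 this.1
      exact_mod_cast Finset.card_le_card hsub
  apply le_antisymm
  · -- sInf A ≤ sInf B
    obtain ⟨X4, b4, εv4, hb01, hεnn, hsum4, hquad4, hbig4⟩ := hfeas4
    have hBne : {k : ℕ | ∃ (X : Matrix (Fin N) (Fin M) ℝ) (b : Fin N → ℝ) (εv : Fin M → ℝ),
        (∀ i, b i = 0 ∨ b i = 1) ∧ (∀ i, 0 ≤ εv i) ∧ (∑ i, (εv i) ^ 2) = ε ^ 2 ∧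
        (∀ i : Fin M,
          (fun k => X k i) ⬝ᵥ ((Sᵀ * S).mulVec fun k => X k i)
              - 2 * ((fun l => Y l i) ⬝ᵥ (S.mulVec fun k => X k i))
            ≤ (εv i) ^ 2 - (fun l => Y l i) ⬝ᵥ (fun l => Y l i)) ∧
        (∀ i j, -(β * b i) ≤ X i j ∧ X i j ≤ β * b i) ∧
        (∑ i, b i) = (k : ℝ)}.Nonempty := by
      refine ⟨(Finset.univ.filter (fun i => b4 i ≠ 0)).card, X4, b4, εv4, hb01, hεnn, hsum4,
        hquad4, hbig4, (sum_binary N b4 hb01)⟩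
    obtain ⟨X, b, εv, hb01', hεnn', hsum', hquad', hbig', hbk⟩ := Nat.sInf_mem hBne
    obtain ⟨⟨hs, habs⟩, hcard⟩ := dir2 X b εv hb01' hεnn' hsum' hquad' hbig'
    rw [hbk] at hcard
    have hle : (Finset.univ.filter (fun i => X i ≠ 0)).card ≤ _ := Nat.cast_le.mp hcard
    exact le_trans (Nat.sInf_le ⟨X, ⟨hs, habs⟩, rfl⟩) hle
  · -- sInf B ≤ sInf A
    obtain ⟨X1, hs1, habs1⟩ := hfeas1
    have hAne : A.Nonempty := ⟨_, X1, ⟨hs1, habs1⟩, rfl⟩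
    obtain ⟨X, ⟨hs, habs⟩, hcard⟩ := Nat.sInf_mem hAne
    obtain ⟨b, εv, hb01, hεnn, hsum, hquad, hbig, hbval⟩ :=
      P1_to_P4 L M N Y S ε β hε hM0 X hs habs
    rw [hcard] at hbval
    exact Nat.sInf_le ⟨X, b, εv, hb01, hεnn, hsum, hquad, hbig, hbval⟩
end

section
/- Let L, M, N be natural numbers, let S ∈ ℝ^{L×N}, and suppose that every set of at most L columns of S is linearly independent. Let X* ∈ ℝ^{N×M} and let I_K ⊆ {1,…,N} be exactly the set of indices of nonzero rows of X*, with |I_K| = K. Set Y = S X*. If I_l ⊆ {1,…,N} satisfies |I_l ∪ I_K| ≤ L and every column of Y lies in the column span of the columns of S indexed by I_l, then I_K ⊆ I_l. -/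
open scoped Classical

/-- Support-containment step in the proof of Lemma 3 of the paper: if every set of at most
`L` columns of `S` is linearly independent, `I_K` is exactly the set of nonzero rows of `X*`
with `|I_K| = K`, `Y = S X*`, and `I_l` satisfies `|I_l ∪ I_K| ≤ L` and every column of `Y`
lies in the span of the columns of `S` indexed by `I_l`, then `I_K ⊆ I_l`. -/
theorem support_containment (L M N K : ℕ)
    (S : Matrix (Fin L) (Fin N) ℝ)
    (hindep : ∀ I : Finset (Fin N), I.card ≤ L →
      LinearIndependent ℝ (fun i : ↥I => S.transpose i.1))
    (Xstar : Matrix (Fin N) (Fin M) ℝ)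
    (IK : Finset (Fin N)) (hIK : ∀ i, i ∈ IK ↔ Xstar i ≠ 0)
    (hIKcard : IK.card = K)
    (Y : Matrix (Fin L) (Fin M) ℝ) (hY : Y = S * Xstar)
    (Il : Finset (Fin N)) (hcard : (Il ∪ IK).card ≤ L)
    (hspan : ∀ j : Fin M, (fun l => Y l j) ∈
      Submodule.span ℝ (Set.range fun i : ↥Il => S.transpose i.1)) :
    IK ⊆ Il := by
  intro i hi
  by_contra hiIl
  obtain ⟨j, hj⟩ : ∃ j, Xstar i j ≠ 0 := by
    by_contra h
    push_neg at h
    exact ((hIK i).mp hi) (funext h)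
  set U : Finset (Fin N) := Il ∪ IK with hU
  have li := hindep U hcard
  have hmem := hspan j
  rw [Submodule.mem_span_range_iff_exists_fun] at hmem
  obtain ⟨d', hd'⟩ := hmem
  set D : Fin N → ℝ := fun x => if h : x ∈ Il then d' ⟨x, h⟩ else 0 with hD
  -- sums over the subtype ↥U equal sums over the finset U
  have hsub : ∀ f : Fin N → Fin L → ℝ, ∑ u : ↥U, f u.1 = ∑ x ∈ U, f x := by
    intro f
    rw [Finset.univ_eq_attach]
    exact Finset.sum_attach U f
  have hsumC : ∑ x ∈ U, Xstar x j • S.transpose x = fun l => Y l j := by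
    rw [Finset.sum_subset (Finset.subset_univ U) (fun x _ hx => ?_)]
    · funext l
      simp only [Finset.sum_apply, Pi.smul_apply, smul_eq_mul, Matrix.transpose_apply,
        hY, Matrix.mul_apply]
      exact Finset.sum_congr rfl fun x _ => mul_comm _ _
    · have hx' : x ∉ IK := fun h => hx (Finset.mem_union_right _ h)
      have : Xstar x = 0 := by
        by_contra h; exact hx' ((hIK x).mpr h)
      simp [this]
  have hsumD : ∑ x ∈ U, D x • S.transpose x = fun l => Y l j := by
    rw [← Finset.sum_subset (Finset.subset_union_left : Il ⊆ U)
      (fun x _ hx => by simp [hD, hx])]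
    rw [← hd', Finset.univ_eq_attach,
      ← Finset.sum_attach Il (fun x => D x • S.transpose x)]
    exact Finset.sum_congr rfl fun x _ => by simp [hD, x.2]
  have hzero : ∑ u : ↥U, (Xstar u.1 j - D u.1) • S.transpose u.1 = 0 := by
    simp only [sub_smul, Finset.sum_sub_distrib]
    rw [hsub (fun x => Xstar x j • S.transpose x), hsub (fun x => D x • S.transpose x),
      hsumC, hsumD, sub_self]
  have := Fintype.linearIndependent_iff.mp li (fun u => Xstar u.1 j - D u.1) hzero
    ⟨i, Finset.mem_union_right _ hi⟩
  rw [sub_eq_zero] at this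
  simp only [hD, hiIl, dif_neg, not_false_iff] at this
  exact hj this
end

section
/- Let L, M, N, K be natural numbers with 1 ≤ L ≤ K and N > K. Let S ∈ ℝ^{L×N}, let X* ∈ ℝ^{N×M} have exactly K nonzero rows with support set I_K, and set Y = S X*. Let I_L ⊆ {1,…,N} be any index set with |I_L| = L such that I_K ⊄ I_L and the L×L submatrix S[:,I_L] is invertible. Define X ∈ ℝ^{N×M} by X[I_L,:] = S[:,I_L]^{-1} Y and X_i = 0 for all i ∉ I_L. Then S X = Y, X has at most L ≤ K nonzero rows, and X ≠ X*. In particular, X* is not the unique minimizer of the number of nonzero rows subject to S X = Y. -/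
open scoped Classical

/-- Deterministic core of the negative direction of Lemma 3 of the paper: with pilot length
`L ≤ K`, picking an index set `I_L` of size `L` not containing the true support `I_K` with
invertible submatrix `S[:,I_L]`, the matrix `X` defined by `X[I_L,:] = S[:,I_L]⁻¹ Y` and
zero rows elsewhere satisfies `S X = Y`, has at most `L ≤ K` nonzero rows, and differs from
`X*`; in particular `X*` is not the unique minimizer of the number of nonzero rows subject
to `S X = Y`. -/
theorem l0_min_fails_when_L_le_K (L M N K : ℕ) (hL : 1 ≤ L) (hLK : L ≤ K) (hKN : K < N)
    (S : Matrix (Fin L) (Fin N) ℝ)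
    (Xstar : Matrix (Fin N) (Fin M) ℝ)
    (IK : Finset (Fin N)) (hIK : ∀ i, i ∈ IK ↔ Xstar i ≠ 0) (hIKcard : IK.card = K)
    (Y : Matrix (Fin L) (Fin M) ℝ) (hY : Y = S * Xstar)
    (IL : Finset (Fin N)) (hILcard : IL.card = L) (hnotsub : ¬ IK ⊆ IL)
    (e : Fin L ≃ ↥IL)
    (SL : Matrix (Fin L) (Fin L) ℝ) (hSL : SL = Matrix.of fun a b => S a (e b).1)
    (hinv : IsUnit SL.det)
    (X : Matrix (Fin N) (Fin M) ℝ)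
    (hXout : ∀ i ∉ IL, X i = 0)
    (hXin : ∀ (a : Fin L) (j : Fin M), X ((e a) : Fin N) j = (SL⁻¹ * Y) a j) :
    S * X = Y ∧
    (Finset.univ.filter (fun i => X i ≠ 0)).card ≤ L ∧
    X ≠ Xstar ∧
    ∃ Z : Matrix (Fin N) (Fin M) ℝ, Z ≠ Xstar ∧ S * Z = Y ∧
      (Finset.univ.filter (fun i => Z i ≠ 0)).card ≤
        (Finset.univ.filter (fun i => Xstar i ≠ 0)).card := by

  have hfilter : Finset.univ.filter (fun i => X i ≠ 0) ⊆ IL := by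
    intro i hi
    simp only [Finset.mem_filter] at hi
    by_contra h
    exact hi.2 (hXout i h)
  have hSX : S * X = Y := by
    ext a j
    have h1 : (S * X) a j = ∑ i ∈ IL, S a i * X i j := by
      rw [Matrix.mul_apply]
      refine (Finset.sum_subset (Finset.subset_univ _) ?_).symm
      intro i _ hi
      simp [hXout i hi]
    have h2 : ∑ i ∈ IL, S a i * X i j = ∑ b : Fin L, S a (e b) * X (e b) j :=
      (Finset.sum_coe_sort IL _).symm.trans
        (Equiv.sum_comp e (fun i : IL => S a i.1 * X i.1 j)).symm
    have h3 : ∀ b : Fin L, S a (e b) * X (e b) j = SL a b * (SL⁻¹ * Y) b j := by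
      intro b
      rw [hXin b j, hSL]
      rfl
    have h4 : (SL * (SL⁻¹ * Y)) a j = Y a j := by
      rw [← Matrix.mul_assoc, Matrix.mul_nonsing_inv SL hinv, Matrix.one_mul]
    rw [h1, h2]
    simp only [h3]
    rw [← Matrix.mul_apply, h4]
  refine ⟨hSX, le_trans (Finset.card_le_card hfilter) hILcard.le, ?_, ?_⟩
  · obtain ⟨i, hiK, hiL⟩ := Finset.not_subset.mp hnotsub
    intro heq
    exact (hIK i).mp hiK (heq ▸ hXout i hiL)
  · refine ⟨X, ?_, hSX, ?_⟩
    · obtain ⟨i, hiK, hiL⟩ := Finset.not_subset.mp hnotsub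
      intro heq
      exact (hIK i).mp hiK (heq ▸ hXout i hiL)
    · have : Finset.univ.filter (fun i => Xstar i ≠ 0) = IK := by
        ext i; simp [hIK i]
      rw [this, hIKcard]
      exact le_trans (le_trans (Finset.card_le_card hfilter) hILcard.le) hLK
end

section
/- Let L, M, N, K be natural numbers with 1 ≤ L ≤ K < N, let X* ∈ ℝ^{N×M} have exactly K nonzero rows, and let S be a random L×N matrix with i.i.d. standard Gaussian entries. Then almost surely there exists X ∈ ℝ^{N×M} with X ≠ X*, S X = S X*, and X has at most K nonzero rows. In particular, almost surely X* cannot be recovered as the unique minimizer of the number of nonzero rows subject to S X = S X*. -/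
open MeasureTheory ProbabilityTheory
open scoped Classical

/-- Deterministic core: if the `(l0, j)` entry of `S` is relevant (with `j` outside the
support of `Xstar`) then either `S l0 j = 0` or there is a sparse alternative solution. -/
lemma gaussian_l0_aux (L M N K : ℕ) (hLK : L ≤ K)
    (Xstar : Matrix (Fin N) (Fin M) ℝ)
    (hXstar : (Finset.univ.filter (fun i => Xstar i ≠ 0)).card = K)
    (S : Matrix (Fin L) (Fin N) ℝ) (l0 : Fin L) (j : Fin N)
    (hj : j ∉ Finset.univ.filter (fun i => Xstar i ≠ 0))
    (hno : ¬ ∃ X : Matrix (Fin N) (Fin M) ℝ, X ≠ Xstar ∧ S * X = S * Xstar ∧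
        (Finset.univ.filter (fun i => X i ≠ 0)).card ≤ K) :
    S l0 j = 0 := by
  set A : Finset (Fin N) := Finset.univ.filter (fun i => Xstar i ≠ 0) with hA
  set T : Finset (Fin N) := insert j A with hT
  have hTcard : T.card = K + 1 := by
    rw [hT, Finset.card_insert_of_notMem hj, hXstar]
  -- the columns of S indexed by T are linearly dependent
  have hdep : ¬ LinearIndependent ℝ (fun i : T => (fun l => S l i.1 : Fin L → ℝ)) := by
    intro hli
    have hcard := hli.fintype_card_le_finrank
    rw [Module.finrank_pi ℝ] at hcard
    simp only [Fintype.card_coe, hTcard, Fintype.card_fin] at hcard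
    omega
  rw [Fintype.not_linearIndependent_iff] at hdep
  obtain ⟨g, hgsum, i1, hi1⟩ := hdep
  -- extend g to all of Fin N
  set c : Fin N → ℝ := fun i => if h : i ∈ T then g ⟨i, h⟩ else 0 with hc
  have hcT : ∀ i, i ∉ T → c i = 0 := by
    intro i hi; simp [hc, hi]
  have hcsum : ∀ l : Fin L, ∑ i : Fin N, c i * S l i = 0 := by
    intro l
    have h1 : ∑ i : Fin N, c i * S l i = ∑ i ∈ T, c i * S l i := by
      refine (Finset.sum_subset (Finset.subset_univ T) ?_).symm
      intro i _ hi; rw [hcT i hi, zero_mul]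
    have h2 : ∑ i ∈ T, c i * S l i = ∑ i : T, g i * S l i.1 := by
      rw [← Finset.sum_attach T (fun i => c i * S l i)]
      refine Finset.sum_congr rfl ?_
      intro i _; simp [hc, i.2]
    have h3 := congrFun hgsum l
    simp only [Finset.sum_apply, Pi.smul_apply, smul_eq_mul, Pi.zero_apply] at h3
    rw [h1, h2, h3]
  by_cases hex : ∃ i0 ∈ A, c i0 ≠ 0
  · -- construct an alternative solution, contradiction
    exfalso
    obtain ⟨i0, hi0A, hci0⟩ := hex
    set X : Matrix (Fin N) (Fin M) ℝ :=
      fun i m => Xstar i m + c i * (-(c i0)⁻¹ * Xstar i0 m) with hX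
    have hXi0 : X i0 = 0 := by
      funext m
      show Xstar i0 m + c i0 * (-(c i0)⁻¹ * Xstar i0 m) = 0
      rw [← mul_assoc, mul_neg, mul_inv_cancel₀ hci0]
      ring
    have hXstari0 : Xstar i0 ≠ 0 := by
      rw [hA] at hi0A; simpa using (Finset.mem_filter.mp hi0A).2
    refine hno ⟨X, ?_, ?_, ?_⟩
    · intro h
      exact hXstari0 (by rw [← h, hXi0])
    · funext l m
      simp only [Matrix.mul_apply, hX]
      have : ∑ i : Fin N, S l i * (Xstar i m + c i * (-(c i0)⁻¹ * Xstar i0 m))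
          = ∑ i : Fin N, S l i * Xstar i m
            + (∑ i : Fin N, c i * S l i) * (-(c i0)⁻¹ * Xstar i0 m) := by
        rw [Finset.sum_mul, ← Finset.sum_add_distrib]
        refine Finset.sum_congr rfl fun i _ => by ring
      show ∑ i : Fin N, S l i * (Xstar i m + c i * (-(c i0)⁻¹ * Xstar i0 m))
        = ∑ i : Fin N, S l i * Xstar i m
      rw [this, hcsum l, zero_mul, add_zero]
    · have hsub : Finset.univ.filter (fun i => X i ≠ 0) ⊆ T.erase i0 := by
        intro i hi
        rw [Finset.mem_filter] at hi
        rcases hi with ⟨-, hXi⟩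
        rw [Finset.mem_erase]
        constructor
        · intro h; exact hXi (h ▸ hXi0)
        · by_contra hiT
          refine hXi ?_
          have hcA : c i = 0 := hcT i hiT
          have hXsi : Xstar i = 0 := by
            by_contra h
            exact hiT (Finset.mem_insert_of_mem (by simp [hA, h]))
          funext m
          simp [hX, hcA, congrFun hXsi m]
      convert (show (Finset.univ.filter (fun i => X i ≠ 0)).card ≤ K from ?_)
      calc _
          ≤ (T.erase i0).card := Finset.card_le_card hsub
        _ = T.card - 1 := Finset.card_erase_of_mem (Finset.mem_insert_of_mem hi0A)
        _ = K := by rw [hTcard]; omega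
  · -- c is supported only at j, so the column entry vanishes
    push_neg at hex
    have hcj : c j ≠ 0 := by
      have hi1T : (i1 : Fin N) ∈ T := i1.2
      have hci1 : c i1.1 ≠ 0 := by simpa [hc, i1.2] using hi1
      rcases Finset.mem_insert.mp hi1T with h | h
      · rwa [← h]
      · exact absurd (hex _ h) hci1
    have := hcsum l0
    rw [Finset.sum_eq_single j ?_ (by simp)] at this
    · exact (mul_eq_zero.mp this).resolve_left hcj
    · intro i _ hij
      have : c i = 0 := by
        by_cases hiT : i ∈ T
        · rcases Finset.mem_insert.mp hiT with h | h
          · exact absurd h hij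
          · exact hex _ h
        · exact hcT i hiT
      rw [this, zero_mul]

/-- Negative part of Lemma 3 of the paper: if `1 ≤ L ≤ K < N` and `X*` has exactly `K`
nonzero rows, then for a random Gaussian `L × N` matrix `S`, almost surely there exists
`X ≠ X*` with `S X = S X*` and at most `K` nonzero rows; hence almost surely `X*` is not
the unique minimizer of the number of nonzero rows subject to `S X = S X*`. -/
theorem gaussian_l0_recovery_fails_of_L_le_K (L M N K : ℕ)
    (hL : 1 ≤ L) (hLK : L ≤ K) (hKN : K < N)
    (Xstar : Matrix (Fin N) (Fin M) ℝ)
    (hXstar : (Finset.univ.filter (fun i => Xstar i ≠ 0)).card = K) :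
    (Measure.pi fun _ : Fin L => Measure.pi fun _ : Fin N => gaussianReal 0 1)
      {S : Matrix (Fin L) (Fin N) ℝ |
        ¬ ∃ X : Matrix (Fin N) (Fin M) ℝ, X ≠ Xstar ∧ S * X = S * Xstar ∧
            (Finset.univ.filter (fun i => X i ≠ 0)).card ≤ K} = 0 := by
  -- pick an index j outside the support of Xstar
  obtain ⟨j, hj⟩ : ∃ j : Fin N, j ∉ Finset.univ.filter (fun i => Xstar i ≠ 0) := by
    by_contra h
    push_neg at h
    have : (Finset.univ.filter (fun i => Xstar i ≠ 0)) = Finset.univ :=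
      Finset.eq_univ_iff_forall.mpr h
    rw [this, Finset.card_univ, Fintype.card_fin] at hXstar
    omega
  set l0 : Fin L := ⟨0, hL⟩
  have hnull : (Measure.pi fun _ : Fin L => Measure.pi fun _ : Fin N => gaussianReal 0 1)
      (Function.eval l0 ⁻¹' (Function.eval j ⁻¹' ({0} : Set ℝ))) = 0 := by
    refine Measure.pi_eval_preimage_null _ ?_
    refine Measure.pi_eval_preimage_null _ ?_
    exact gaussianReal_absolutelyContinuous 0 one_ne_zero (by simp)
  exact measure_mono_null
    (fun S hS => gaussian_l0_aux L M N K hLK Xstar hXstar S l0 j hj hS) hnull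
end

section
/- Let L, M, N, K be natural numbers with K + 1 ≤ L ≤ N, let X* ∈ ℝ^{N×M} be a fixed matrix with exactly K nonzero rows, and let S be a random L×N matrix with i.i.d. standard Gaussian entries. Then almost surely the following holds: every X ∈ ℝ^{N×M} with S X = S X* and at most K nonzero rows satisfies X = X*. In particular, almost surely X* is the unique minimizer of the number of nonzero rows subject to S X = S X*. -/
set_option maxHeartbeats 1000000

open MeasureTheory ProbabilityTheory
open scoped Classical

namespace GaussianL0Aux

open MvPolynomial

instance : NullSingletonClass (gaussianReal 0 1) :=
  ⟨fun x => (gaussianReal_absolutelyContinuous 0 one_ne_zero) (measure_singleton x)⟩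

lemma measurable_mv_eval {σ : Type*} (p : MvPolynomial σ ℝ) :
    Measurable fun x : σ → ℝ => MvPolynomial.eval x p := by
  simp only [MvPolynomial.eval_eq]
  refine Finset.measurable_sum _ fun m _ => Measurable.mul measurable_const ?_
  exact Finset.measurable_prod _ fun i _ => (measurable_pi_apply i).pow_const _

lemma pi_gaussian_zero_set : ∀ {n : ℕ} (p : MvPolynomial (Fin n) ℝ), p ≠ 0 →
    (Measure.pi fun _ : Fin n => gaussianReal 0 1)
      {x : Fin n → ℝ | MvPolynomial.eval x p = 0} = 0 := by
  intro n
  induction n with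
  | zero =>
    intro p hp
    obtain ⟨c, rfl⟩ := MvPolynomial.C_surjective (Fin 0) p
    have hc : c ≠ 0 := fun h => hp (by rw [h, map_zero])
    convert measure_empty
    · ext x; simp [hc]
    · infer_instance
  | succ n ih =>
    intro p hp
    set q := MvPolynomial.finSuccEquiv ℝ n p with hq
    have hq0 : q ≠ 0 := by
      intro h
      apply hp
      have := (MvPolynomial.finSuccEquiv ℝ n).injective (by rw [← hq, h, map_zero] :
        MvPolynomial.finSuccEquiv ℝ n p = MvPolynomial.finSuccEquiv ℝ n 0)
      exact this
    -- a nonzero coefficient of q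
    obtain ⟨k, hk⟩ : ∃ k, q.coeff k ≠ 0 := by
      by_contra h
      push_neg at h
      exact hq0 (Polynomial.ext fun k => by simp [h k])
    set ν := (gaussianReal 0 1 : Measure ℝ)
    have hmp := measurePreserving_piFinSuccAbove (fun _ : Fin (n + 1) => ν) 0
    set e := MeasurableEquiv.piFinSuccAbove (fun _ : Fin (n + 1) => ℝ) 0
    set A : Set (ℝ × (Fin n → ℝ)) :=
      {z | MvPolynomial.eval (Fin.cons z.1 z.2 : Fin (n+1) → ℝ) p = 0} with hA
    have hApre : {x : Fin (n+1) → ℝ | MvPolynomial.eval x p = 0} = e ⁻¹' A := by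
      ext x
      simp only [Set.mem_setOf_eq, Set.mem_preimage, hA]
      constructor
      · intro h
        have : (Fin.cons (e x).1 (e x).2 : Fin (n+1) → ℝ) = x := by
          have := e.symm_apply_apply x
          rwa [show ∀ z : ℝ × (Fin n → ℝ), e.symm z = Fin.cons z.1 z.2 from ?_] at this
          intro z
          exact Fin.insertNth_zero' z.1 z.2
        rw [this]; exact h
      · intro h
        have : (Fin.cons (e x).1 (e x).2 : Fin (n+1) → ℝ) = x := by
          have := e.symm_apply_apply x
          rwa [show ∀ z : ℝ × (Fin n → ℝ), e.symm z = Fin.cons z.1 z.2 from ?_] at this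
          intro z
          exact Fin.insertNth_zero' z.1 z.2
        rwa [this] at h
    have hAmeas : MeasurableSet A := by
      have : Measurable fun z : ℝ × (Fin n → ℝ) =>
          MvPolynomial.eval (Fin.cons z.1 z.2 : Fin (n+1) → ℝ) p := by
        refine (measurable_mv_eval p).comp ?_
        refine measurable_pi_lambda _ fun i => ?_
        refine Fin.cases ?_ ?_ i
        · exact measurable_fst
        · intro j
          simpa [Function.comp_def] using (measurable_pi_apply j).comp measurable_snd
      exact this (measurableSet_singleton 0)
    rw [hApre, hmp.measure_preimage hAmeas.nullMeasurableSet]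
    rw [Measure.prod_apply_symm hAmeas]
    have hnull : (Measure.pi fun _ : Fin n => ν)
        {s : Fin n → ℝ | MvPolynomial.eval s (q.coeff k) = 0} = 0 := ih _ hk
    rw [← lintegral_zero (μ := Measure.pi fun _ : Fin n => ν)]
    refine lintegral_congr_ae ?_
    have hae : ∀ᵐ s ∂(Measure.pi fun _ : Fin n => ν),
        MvPolynomial.eval s (q.coeff k) ≠ 0 := by
      rw [MeasureTheory.ae_iff]
      convert hnull using 2
      ext s
      simp
    refine hae.mono fun s hs => ?_
    have hpre : (fun x => (x, s)) ⁻¹' A =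
        {x : ℝ | Polynomial.eval x (q.map (MvPolynomial.eval s)) = 0} := by
      ext x
      simp only [Set.mem_preimage, hA, Set.mem_setOf_eq]
      rw [MvPolynomial.eval_eq_eval_mv_eval', hq]
    have hmapne : q.map (MvPolynomial.eval s) ≠ 0 := by
      intro h
      apply hs
      have := congrArg (fun r => Polynomial.coeff r k) h
      simpa [Polynomial.coeff_map] using this
    have hfin : ((fun x => (x, s)) ⁻¹' A).Finite := by
      rw [hpre]
      exact Polynomial.finite_setOf_isRoot hmapne
    exact hfin.measure_zero ν

lemma eval_sumToIter {σ τ : Type*} (p : MvPolynomial (σ ⊕ τ) ℝ) (x : σ → ℝ) (y : τ → ℝ) :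
    MvPolynomial.eval (Sum.elim x y) p =
      MvPolynomial.eval x (MvPolynomial.map (MvPolynomial.eval y)
        (MvPolynomial.sumToIter ℝ σ τ p)) := by
  induction p using MvPolynomial.induction_on with
  | C a => simp [sumToIter_C]
  | add p q hp hq => simp [map_add, hp, hq]
  | mul_X p i hp =>
    cases i with
    | inl b => simp [map_mul, sumToIter_Xl, hp]
    | inr c => simp [map_mul, sumToIter_Xr, hp]


lemma sumToIter_ne_zero {σ τ : Type*} {p : MvPolynomial (σ ⊕ τ) ℝ} (hp : p ≠ 0) :
    MvPolynomial.sumToIter ℝ σ τ p ≠ 0 := by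
  have hco : (MvPolynomial.sumRingEquiv ℝ σ τ) p = sumToIter ℝ σ τ p :=
    congrArg (fun f => f p) (show ((MvPolynomial.sumRingEquiv ℝ σ τ : _ →+* _)) = sumToIter ℝ σ τ from
      MvPolynomial.ringHom_ext (fun r => by simp [sumToIter_C])
        (fun i => by cases i <;> simp [sumToIter_Xl, sumToIter_Xr]))
  intro h
  apply hp
  apply (MvPolynomial.sumRingEquiv ℝ σ τ).injective
  rw [hco, h, map_zero]

/-- reindexing equivalence -/
def rowSplit (L N : ℕ) : Fin (L + 1) × Fin N ≃ (Fin N ⊕ (Fin L × Fin N)) where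
  toFun q := Fin.cases (Sum.inl q.2) (fun j' => Sum.inr (j', q.2)) q.1
  invFun := Sum.elim (fun i => (0, i)) fun q' => (q'.1.succ, q'.2)
  left_inv := by
    rintro ⟨j, i⟩
    induction j using Fin.cases <;> simp
  right_inv := by
    rintro (i | ⟨j, i⟩) <;> simp

lemma matrix_gaussian_zero_set : ∀ {L : ℕ} {N : ℕ}
    (p : MvPolynomial (Fin L × Fin N) ℝ), p ≠ 0 →
    (Measure.pi fun _ : Fin L => Measure.pi fun _ : Fin N => gaussianReal 0 1)
      {S : Matrix (Fin L) (Fin N) ℝ | MvPolynomial.eval (fun q => S q.1 q.2) p = 0} = 0 := by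
  intro L
  induction L with
  | zero =>
    intro N p hp
    obtain ⟨c, rfl⟩ := MvPolynomial.C_surjective (Fin 0 × Fin N) p
    have hc : c ≠ 0 := fun h => hp (by rw [h, map_zero])
    have hem : {S : Matrix (Fin 0) (Fin N) ℝ | MvPolynomial.eval (fun q : Fin 0 × Fin N => S q.1 q.2) (C c) = 0}
        = ∅ := by
      ext x; simp [hc]
    exact (congrArg (fun s => (Measure.pi fun _ : Fin 0 => Measure.pi fun _ : Fin N => gaussianReal 0 1) s) hem).trans measure_empty
  | succ L ih =>
    intro N p hp
    set ν := (Measure.pi fun _ : Fin N => gaussianReal 0 1) with hν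
    set μL := (Measure.pi fun _ : Fin L => ν) with hμL
    set r := rowSplit L N with hr
    set p1 := MvPolynomial.rename r p with hp1
    have hp1ne : p1 ≠ 0 := fun h =>
      hp (MvPolynomial.rename_injective _ r.injective (by rw [← hp1, h, map_zero]))
    set q := MvPolynomial.sumToIter ℝ (Fin N) (Fin L × Fin N) p1 with hqdef
    have hqne : q ≠ 0 := sumToIter_ne_zero hp1ne
    obtain ⟨m, hm⟩ := MvPolynomial.ne_zero_iff.1 hqne
    have hmp := measurePreserving_piFinSuccAbove (fun _ : Fin (L + 1) => ν) 0
    set e := MeasurableEquiv.piFinSuccAbove (fun _ : Fin (L + 1) => (Fin N → ℝ)) 0 with he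
    have hesymm : ∀ z : (Fin N → ℝ) × (Fin L → Fin N → ℝ), e.symm z = Fin.cons z.1 z.2 :=
      fun z => Fin.insertNth_zero' z.1 z.2
    set A : Set ((Fin N → ℝ) × (Fin L → Fin N → ℝ)) :=
      {z | MvPolynomial.eval
        (fun q' : Fin (L + 1) × Fin N =>
          (Fin.cons z.1 z.2 : Fin (L + 1) → Fin N → ℝ) q'.1 q'.2) p = 0} with hA
    -- the key evaluation identity
    have hkey : ∀ (x : Fin N → ℝ) (Y : Fin L → Fin N → ℝ),
        MvPolynomial.eval
          (fun q' : Fin (L + 1) × Fin N =>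
            (Fin.cons x Y : Fin (L + 1) → Fin N → ℝ) q'.1 q'.2) p =
        MvPolynomial.eval x (MvPolynomial.map
          (MvPolynomial.eval (fun q' : Fin L × Fin N => Y q'.1 q'.2)) q) := by
      intro x Y
      rw [hqdef, ← eval_sumToIter, hp1, MvPolynomial.eval_rename]
      have harg : ((Sum.elim x fun q' : Fin L × Fin N => Y q'.1 q'.2) ∘ ⇑r) =
          fun q' : Fin (L + 1) × Fin N =>
            (Fin.cons x Y : Fin (L + 1) → Fin N → ℝ) q'.1 q'.2 := by
        funext q'
        obtain ⟨j, i⟩ := q'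
        induction j using Fin.cases with
        | zero => simp [hr, rowSplit]
        | succ j' => simp [hr, rowSplit]
      rw [harg]
    have hApre : {S : Matrix (Fin (L + 1)) (Fin N) ℝ |
        MvPolynomial.eval (fun q' => S q'.1 q'.2) p = 0} = e ⁻¹' A := by
      ext S
      have hconsS : (Fin.cons (e S).1 (e S).2 : Fin (L + 1) → Fin N → ℝ) = S := by
        rw [← hesymm (e S)]; exact e.symm_apply_apply S
      simp only [Set.mem_setOf_eq, Set.mem_preimage, hA, Set.mem_setOf_eq]
      exact Iff.of_eq (congrArg (fun T : Fin (L + 1) → Fin N → ℝ =>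
        MvPolynomial.eval (fun q' : Fin (L + 1) × Fin N => T q'.1 q'.2) p = 0) hconsS.symm)
    have hAmeas : MeasurableSet A := by
      have : Measurable fun z : (Fin N → ℝ) × (Fin L → Fin N → ℝ) =>
          MvPolynomial.eval
            (fun q' : Fin (L + 1) × Fin N =>
              (Fin.cons z.1 z.2 : Fin (L + 1) → Fin N → ℝ) q'.1 q'.2) p := by
        refine (measurable_mv_eval p).comp ?_
        refine measurable_pi_lambda _ fun a => ?_
        obtain ⟨j, i⟩ := a
        induction j using Fin.cases with
        | zero => simpa [Function.comp_def] using (measurable_pi_apply i).comp measurable_fst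
        | succ j' =>
          simpa [Function.comp_def] using ((measurable_pi_apply i).comp ((measurable_pi_apply j').comp
            measurable_snd))
      exact this (measurableSet_singleton 0)
    refine (congrArg (fun s => (Measure.pi fun _ : Fin (L + 1) => ν) s) hApre).trans ?_
    rw [hmp.measure_preimage hAmeas.nullMeasurableSet]
    rw [Measure.prod_apply_symm hAmeas]
    have hnull : μL {Y : Fin L → Fin N → ℝ |
        MvPolynomial.eval (fun q' : Fin L × Fin N => Y q'.1 q'.2) (q.coeff m) = 0} = 0 :=
      ih _ hm
    rw [← lintegral_zero (μ := μL)]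
    refine lintegral_congr_ae ?_
    have hae : ∀ᵐ Y ∂μL,
        MvPolynomial.eval (fun q' : Fin L × Fin N => Y q'.1 q'.2) (q.coeff m) ≠ 0 := by
      rw [MeasureTheory.ae_iff]
      convert hnull using 2
      ext Y
      simp
    refine hae.mono fun Y hY => ?_
    show ν ((fun x => (x, Y)) ⁻¹' A) = 0
    have hmapne : MvPolynomial.map
        (MvPolynomial.eval (fun q' : Fin L × Fin N => Y q'.1 q'.2)) q ≠ 0 := by
      intro h
      apply hY
      have := congrArg (fun rr => MvPolynomial.coeff m rr) h
      simpa [MvPolynomial.coeff_map] using this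
    have hpre : (fun x => (x, Y)) ⁻¹' A =
        {x : Fin N → ℝ | MvPolynomial.eval x (MvPolynomial.map
          (MvPolynomial.eval (fun q' : Fin L × Fin N => Y q'.1 q'.2)) q) = 0} := by
      ext x
      simp only [Set.mem_preimage, hA, Set.mem_setOf_eq]
      rw [hkey]
    rw [hpre]
    exact pi_gaussian_zero_set _ hmapne

def badE {L N : ℕ} (T : Finset (Fin N)) (c : Fin N → ℝ) : Set (Matrix (Fin L) (Fin N) ℝ) :=
  {S | ∃ d : Fin N → ℝ, (∀ i ∉ T, d i = c i) ∧ S.mulVec d = 0}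

lemma badE_null {L N K : ℕ} (hKL : K + 1 ≤ L) (hLN : L ≤ N)
    (T : Finset (Fin N)) (c : Fin N → ℝ) (hT : T.card ≤ K)
    (hc : ∃ i0, i0 ∉ T ∧ c i0 ≠ 0) :
    (Measure.pi fun _ : Fin L => Measure.pi fun _ : Fin N => gaussianReal 0 1)
      (badE T c) = 0 := by
  obtain ⟨i0, hi0T, hi0c⟩ := hc
  -- an injection of `Option ↥T` into the rows
  have hcard : Fintype.card (Option ↥T) ≤ Fintype.card (Fin L) := by
    simpa [Fintype.card_option, Fintype.card_coe] using
      le_trans (Nat.succ_le_succ hT) (by simpa using hKL)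
  obtain ⟨ρ⟩ := Function.Embedding.nonempty_of_card_le hcard
  set colOf : Option ↥T → Fin N := fun b => Option.elim b i0 (fun j => (j : Fin N)) with hcolOf
  have hcolInj : Function.Injective colOf := by
    rintro (_ | a) (_ | b) h <;> simp only [hcolOf, Option.elim] at h
    · rfl
    · exact absurd (h ▸ b.2) hi0T
    · exact absurd (h ▸ a.2 : i0 ∈ T) hi0T
    · exact congrArg _ (Subtype.ext h)
  set P : Matrix (Option ↥T) (Option ↥T) (MvPolynomial (Fin L × Fin N) ℝ) :=
    fun a b => Option.elim b
      (∑ i ∈ Tᶜ, MvPolynomial.C (c i) * MvPolynomial.X (ρ a, i))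
      (fun j => MvPolynomial.X (ρ a, (j : Fin N))) with hP
  set pdet := P.det with hpdet
  -- claim 1 : badE is inside the zero set of pdet
  have claim1 : badE T c ⊆
      {S : Matrix (Fin L) (Fin N) ℝ | MvPolynomial.eval (fun q => S q.1 q.2) pdet = 0} := by
    rintro S ⟨d, hd, hSd⟩
    have hdet : MvPolynomial.eval (fun q => S q.1 q.2) pdet =
        (P.map (MvPolynomial.eval fun q => S q.1 q.2)).det := by
      rw [hpdet]
      exact RingHom.map_det (MvPolynomial.eval fun q => S q.1 q.2) P
    set M1 := P.map (MvPolynomial.eval fun q => S q.1 q.2) with hM1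
    set u : Option ↥T → ℝ := fun b => Option.elim b 1 (fun j => d (j : Fin N)) with hu
    have hu0 : u ≠ 0 := by
      intro h
      have := congrFun h none
      simp [hu] at this
    have hMu : M1.mulVec u = 0 := by
      funext a
      have expand : (M1.mulVec u) a = (∑ i ∈ Tᶜ, c i * S (ρ a) i) * 1 +
          ∑ j : ↥T, S (ρ a) (j : Fin N) * d (j : Fin N) := by
        rw [Matrix.mulVec, dotProduct, Fintype.sum_option]
        congr 1
        · simp only [hM1, Matrix.map_apply]; simp [hP, hu]
        · simp only [hM1, Matrix.map_apply]; simp [hP, hu]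
      rw [expand]
      have h1 : ∑ i ∈ Tᶜ, c i * S (ρ a) i = ∑ i ∈ Tᶜ, S (ρ a) i * d i := by
        refine Finset.sum_congr rfl fun i hi => ?_
        rw [hd i (Finset.mem_compl.1 hi), mul_comm]
      have h2 : ∑ j : ↥T, S (ρ a) (j : Fin N) * d (j : Fin N) =
          ∑ i ∈ T, S (ρ a) i * d i := Finset.sum_coe_sort T (fun i => S (ρ a) i * d i)
      rw [mul_one, h1, h2, add_comm, Finset.sum_add_sum_compl T (fun i => S (ρ a) i * d i)]
      have := congrFun hSd (ρ a)
      simpa [Matrix.mulVec, dotProduct] using this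
    show MvPolynomial.eval (fun q => S q.1 q.2) pdet = 0
    rw [hdet]
    exact Matrix.exists_mulVec_eq_zero_iff.1 ⟨u, hu0, hMu⟩
  -- claim 2 : pdet is a nonzero polynomial
  have claim2 : pdet ≠ 0 := by
    intro h0
    set S0 : Matrix (Fin L) (Fin N) ℝ :=
      fun j i => if ∃ b : Option ↥T, ρ b = j ∧ colOf b = i then 1 else 0 with hS0
    have hS0val : ∀ (a : Option ↥T) (i : Fin N), S0 (ρ a) i = if colOf a = i then 1 else 0 := by
      intro a i
      have hex : (∃ b, ρ b = ρ a ∧ colOf b = i) ↔ colOf a = i := by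
        constructor
        · rintro ⟨b, hb1, hb2⟩; rwa [ρ.injective hb1] at hb2
        · intro h; exact ⟨a, rfl, h⟩
      show (if ∃ b, ρ b = ρ a ∧ colOf b = i then (1 : ℝ) else 0) = _
      simp only [hex]
    have hdiag : P.map (MvPolynomial.eval fun q => S0 q.1 q.2) =
        Matrix.diagonal (fun b => Option.elim b (c i0) 1) := by
      funext a b
      cases b with
      | none =>
        have : (P.map (MvPolynomial.eval fun q => S0 q.1 q.2)) a none
            = ∑ i ∈ Tᶜ, c i * S0 (ρ a) i := by simp only [Matrix.map_apply]; simp [hP]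
        rw [this]
        have : ∑ i ∈ Tᶜ, c i * S0 (ρ a) i
            = ∑ i ∈ Tᶜ, if i = colOf a then c i else 0 := by
          refine Finset.sum_congr rfl fun i _ => ?_
          rw [hS0val]
          by_cases h : colOf a = i
          · rw [if_pos h, if_pos h.symm, mul_one]
          · rw [if_neg h, if_neg (fun hh => h hh.symm), mul_zero]
        rw [this, Finset.sum_ite_eq' Tᶜ (colOf a) c]
        cases a with
        | none =>
          simp [hcolOf, Finset.mem_compl, hi0T, Matrix.diagonal]
        | some j =>
          have : (colOf (some j) : Fin N) ∈ T := j.2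
          simp [Finset.mem_compl, this, Matrix.diagonal]
      | some j =>
        have : (P.map (MvPolynomial.eval fun q => S0 q.1 q.2)) a (some j)
            = S0 (ρ a) (j : Fin N) := by simp only [Matrix.map_apply]; simp [hP]
        rw [this, hS0val]
        have hiff : colOf a = (j : Fin N) ↔ a = some j := by
          constructor
          · intro h; exact hcolInj (h.trans rfl)
          · rintro rfl; rfl
        by_cases h : a = some j
        · subst h; simp [Matrix.diagonal, hiff]
        · have : ¬ colOf a = (j : Fin N) := fun hh => h (hiff.1 hh)
          simp [Matrix.diagonal, this, h, Ne.symm]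
    have : MvPolynomial.eval (fun q => S0 q.1 q.2) pdet = c i0 := by
      rw [hpdet, RingHom.map_det, RingHom.mapMatrix_apply, hdiag, Matrix.det_diagonal,
        Fintype.prod_option]
      simp
    rw [h0] at this
    simp at this
    exact hi0c this.symm
  exact measure_mono_null claim1 (matrix_gaussian_zero_set pdet claim2)

end GaussianL0Aux

open GaussianL0Aux

/-- Positive part of Lemma 3 of the paper: if `K + 1 ≤ L ≤ N` and `X*` has exactly `K`
nonzero rows, then for a random Gaussian `L × N` matrix `S`, almost surely every `X` with
`S X = S X*` and at most `K` nonzero rows equals `X*`; hence almost surely `X*` is the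
unique minimizer of the number of nonzero rows subject to `S X = S X*`. -/
theorem gaussian_l0_recovery_succeeds_of_K_lt_L (L M N K : ℕ)
    (hKL : K + 1 ≤ L) (hLN : L ≤ N)
    (Xstar : Matrix (Fin N) (Fin M) ℝ)
    (hXstar : (Finset.univ.filter (fun i => Xstar i ≠ 0)).card = K) :
    (Measure.pi fun _ : Fin L => Measure.pi fun _ : Fin N => gaussianReal 0 1)
      {S : Matrix (Fin L) (Fin N) ℝ |
        ¬ ∀ X : Matrix (Fin N) (Fin M) ℝ, S * X = S * Xstar →
            (Finset.univ.filter (fun i => X i ≠ 0)).card ≤ K → X = Xstar} = 0 := by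
  set Tstar := Finset.univ.filter (fun i => Xstar i ≠ 0) with hTstar
  set F : (Finset (Fin N) × Fin M) ⊕ (Fin N) → Set (Matrix (Fin L) (Fin N) ℝ) :=
    Sum.elim
      (fun tm => if h : tm.1.card ≤ K ∧
          ∃ i0, i0 ∉ tm.1 ∧ (fun i => if i ∈ tm.1 then (0:ℝ) else - Xstar i tm.2) i0 ≠ 0 then
          badE tm.1 (fun i => if i ∈ tm.1 then (0:ℝ) else - Xstar i tm.2) else ∅)
      (fun i1 => badE (Tstar \ {i1}) (fun i => if i = i1 then (1:ℝ) else 0)) with hF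
  have hFnull : ∀ j, (Measure.pi fun _ : Fin L => Measure.pi fun _ : Fin N => gaussianReal 0 1)
      (F j) = 0 := by
    rintro (⟨T, m⟩ | i1)
    · simp only [hF, Sum.elim_inl]
      split_ifs with h
      · exact badE_null hKL hLN T _ h.1 h.2
      · exact measure_empty
    · refine badE_null hKL hLN _ _ ?_ ⟨i1, ?_, ?_⟩
      · calc (Tstar \ {i1}).card ≤ Tstar.card := Finset.card_le_card (Finset.sdiff_subset)
        _ = K := hXstar
      · simp
      · simp
  refine measure_mono_null ?_ (measure_iUnion_null hFnull)
  intro S hS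
  have hS' : ¬ ∀ X : Matrix (Fin N) (Fin M) ℝ,
      Matrix.of S * X = Matrix.of S * Xstar →
      (Finset.univ.filter (fun i => X i ≠ 0)).card ≤ K → X = Xstar := hS
  push_neg at hS'
  obtain ⟨X, hXeq, hXcard, hXne⟩ := hS'
  set T := Finset.univ.filter (fun i => X i ≠ 0) with hT
  have hXzero : ∀ i, i ∉ T → X i = 0 := by
    intro i hi
    by_contra h
    exact hi (Finset.mem_filter.2 ⟨Finset.mem_univ i, h⟩)
  have hXstarzero : ∀ i, i ∉ Tstar → Xstar i = 0 := by
    intro i hi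
    by_contra h
    exact hi (Finset.mem_filter.2 ⟨Finset.mem_univ i, h⟩)
  by_cases hsubT : Tstar ⊆ T
  · -- case : supports are equal
    have hTT : Tstar = T := Finset.eq_of_subset_of_card_le hsubT (by rw [hXstar]; exact hXcard)
    have hex : ∃ i1 m1, X i1 m1 ≠ Xstar i1 m1 := by
      by_contra h
      push_neg at h
      exact hXne (Matrix.ext fun i j => h i j)
    obtain ⟨i1, m1, hne⟩ := hex
    have hi1 : i1 ∈ Tstar := by
      by_contra h
      have h1 : Xstar i1 = 0 := hXstarzero _ h
      have h2 : X i1 = 0 := hXzero _ (hTT ▸ h)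
      exact hne (by rw [congrFun h1 m1, congrFun h2 m1])
    set z : Fin N → ℝ := fun i => X i m1 - Xstar i m1 with hz
    have hz1 : z i1 ≠ 0 := sub_ne_zero.2 hne
    refine Set.mem_iUnion.2 ⟨Sum.inr i1, ?_⟩
    show S ∈ badE (Tstar \ {i1}) (fun i => if i = i1 then (1:ℝ) else 0)
    refine ⟨fun i => z i * (z i1)⁻¹, ?_, ?_⟩
    · intro i hi
      show z i * (z i1)⁻¹ = if i = i1 then (1:ℝ) else 0
      by_cases h : i = i1
      · subst h
        rw [mul_inv_cancel₀ hz1, if_pos rfl]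
      · have hiTstar : i ∉ Tstar := by
          intro hin
          exact hi (Finset.mem_sdiff.2 ⟨hin, by simp [h]⟩)
        have hx : X i = 0 := hXzero _ (hTT ▸ hiTstar)
        have hxs : Xstar i = 0 := hXstarzero _ hiTstar
        rw [if_neg h]
        simp [hz, congrFun hx m1, congrFun hxs m1]
    · funext j
      have hcol := congrFun (congrFun hXeq j) m1
      rw [Matrix.mul_apply, Matrix.mul_apply] at hcol
      simp only [Matrix.of_apply] at hcol
      show (∑ i, S j i * (z i * (z i1)⁻¹)) = 0
      have hzero : ∑ i, S j i * z i = 0 := by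
        simp only [hz, mul_sub, Finset.sum_sub_distrib]
        rw [hcol]
        ring
      calc ∑ i, S j i * (z i * (z i1)⁻¹) = (∑ i, S j i * z i) * (z i1)⁻¹ := by
            rw [Finset.sum_mul]
            exact Finset.sum_congr rfl fun i _ => by ring
        _ = 0 := by rw [hzero, zero_mul]
  · -- case : some row of Xstar outside the support of X
    obtain ⟨i0, hi0star, hi0T⟩ := Finset.not_subset.1 hsubT
    have hXsi0 : Xstar i0 ≠ 0 := (Finset.mem_filter.1 hi0star).2
    obtain ⟨m0, hm0⟩ := Function.ne_iff.1 hXsi0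
    have hcond : T.card ≤ K ∧
        ∃ i1, i1 ∉ T ∧ (fun i => if i ∈ T then (0:ℝ) else - Xstar i m0) i1 ≠ 0 :=
      ⟨hXcard, ⟨i0, hi0T, by simp only [if_neg hi0T]; exact neg_ne_zero.2 (by simpa using hm0)⟩⟩
    refine Set.mem_iUnion.2 ⟨Sum.inl (T, m0), ?_⟩
    show S ∈ Sum.elim _ _ (Sum.inl (T, m0))
    simp only [Sum.elim_inl]
    refine Eq.mpr (congrArg (S ∈ ·) (dif_pos hcond)) ?_
    show S ∈ badE T (fun i => if i ∈ T then (0:ℝ) else - Xstar i m0)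
    refine ⟨fun i => X i m0 - Xstar i m0, ?_, ?_⟩
    · intro i hi
      show X i m0 - Xstar i m0 = if i ∈ T then (0:ℝ) else - Xstar i m0
      rw [if_neg hi]
      rw [congrFun (hXzero i hi) m0]
      simp
    · funext j
      have hcol := congrFun (congrFun hXeq j) m0
      rw [Matrix.mul_apply, Matrix.mul_apply] at hcol
      simp only [Matrix.of_apply] at hcol
      show (∑ i, S j i * (X i m0 - Xstar i m0)) = 0
      simp only [mul_sub, Finset.sum_sub_distrib]
      rw [hcol]
      ring
end

section
/- Let L, M, N be natural numbers, let S ∈ ℝ^{L×N}, and suppose that every set of at most L columns of S is linearly independent. Let X* ∈ ℝ^{N×M} have exactly K nonzero rows with support set I_K, where K ≤ L, and set Y = S X*. If X ∈ ℝ^{N×M} satisfies S X = Y and the support set I of X satisfies |I ∪ I_K| ≤ L, then I_K ⊆ I and X agrees with X* on all rows, i.e., X = X*. -/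
open scoped Classical

/-- Deterministic exact-recovery statement from the proof of Lemma 3 of the paper: if every
set of at most `L` columns of `S` is linearly independent, `X*` has exactly `K ≤ L` nonzero
rows with support `I_K`, `Y = S X*`, and `X` satisfies `S X = Y` with support `I` such that
`|I ∪ I_K| ≤ L`, then `I_K ⊆ I` and `X = X*`. -/
theorem deterministic_exact_recovery (L M N K : ℕ)
    (S : Matrix (Fin L) (Fin N) ℝ)
    (hindep : ∀ J : Finset (Fin N), J.card ≤ L →
      LinearIndependent ℝ (fun i : ↥J => S.transpose i.1))
    (Xstar : Matrix (Fin N) (Fin M) ℝ)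
    (IK : Finset (Fin N)) (hIK : IK = Finset.univ.filter (fun i => Xstar i ≠ 0))
    (hIKcard : IK.card = K) (hKL : K ≤ L)
    (Y : Matrix (Fin L) (Fin M) ℝ) (hY : Y = S * Xstar)
    (X : Matrix (Fin N) (Fin M) ℝ) (hSX : S * X = Y)
    (I : Finset (Fin N)) (hI : I = Finset.univ.filter (fun i => X i ≠ 0))
    (hcard : (I ∪ IK).card ≤ L) :
    IK ⊆ I ∧ X = Xstar := by

  have hXeq : X = Xstar := by
    have hli := hindep (I ∪ IK) hcard
    rw [Fintype.linearIndependent_iff] at hli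
    ext i j
    by_cases hi : i ∈ I ∪ IK
    · have hzero : ∀ k : Fin N, k ∉ I ∪ IK → X k j - Xstar k j = 0 := by
        intro k hk
        simp only [hI, hIK, Finset.mem_union, Finset.mem_filter, Finset.mem_univ,
          true_and, not_or, not_not] at hk
        rw [hk.1, hk.2]
        simp
      have hsum : ∑ k : ↥(I ∪ IK), (X k.1 j - Xstar k.1 j) • S.transpose k.1 = 0 := by
        funext l
        have h1 : (∑ k : ↥(I ∪ IK), (X k.1 j - Xstar k.1 j) • S.transpose k.1) l
            = ∑ k ∈ (I ∪ IK), (X k j - Xstar k j) * S l k := by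
          rw [Finset.sum_apply]
          rw [← Finset.sum_attach (I ∪ IK) (fun k => (X k j - Xstar k j) * S l k)]
          rfl
        rw [h1]
        have h2 : ∑ k ∈ (I ∪ IK), (X k j - Xstar k j) * S l k
            = ∑ k : Fin N, (X k j - Xstar k j) * S l k := by
          apply Finset.sum_subset (Finset.subset_univ _)
          intro k _ hk
          rw [hzero k hk, zero_mul]
        rw [h2]
        have h3 : ∑ k : Fin N, (X k j - Xstar k j) * S l k
            = (S * X) l j - (S * Xstar) l j := by
          simp [Matrix.mul_apply, mul_sub, Finset.sum_sub_distrib, mul_comm]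
        rw [h3, hSX, hY, sub_self]
        rfl
      have := hli (fun k => X k.1 j - Xstar k.1 j) hsum ⟨i, hi⟩
      have h := sub_eq_zero.mp this
      exact h
    · simp only [hI, hIK, Finset.mem_union, Finset.mem_filter, Finset.mem_univ,
        true_and, not_or, not_not] at hi
      rw [hi.1, hi.2]
  constructor
  · intro i hiK
    rw [hI]
    rw [hIK, Finset.mem_filter] at hiK
    simp only [Finset.mem_filter, Finset.mem_univ, true_and]
    rw [hXeq]
    exact hiK.2
  · exact hXeq
end
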